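/- Over the field ℚ, let B be the 8×8 nilpotent Jordan matrix of shape (5,3), i.e. the block-diagonal matrix J(5,3) with Jordan blocks of sizes 5 and 3. Then there exists a nilpotent 8×8 matrix A over ℚ with AB = BA whose shape is (3,3,1,1). -/

import Mathlib

/-- A nilpotent `n × n` matrix `A` has shape (Jordan type) given by the multiset of parts `μ`
(a partition of `n` with positive parts) if for every `k ≥ 0` the dimension of the kernel of
`A ^ k` equals `Σ_j min (μ_j, k)`. -/
def hasShape {n : ℕ} {F : Type*} [Field F] (A : Matrix (Fin n) (Fin n) F)
    (μ : Multiset ℕ) : Prop :=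
  (∀ i ∈ μ, 0 < i) ∧ μ.sum = n ∧
    ∀ k : ℕ, Module.finrank F (LinearMap.ker ((A ^ k).mulVecLin)) =
      (μ.map (fun m => min m k)).sum

/-- The nilpotent Jordan matrix `J(5,3)` of shape `(5,3)`: the block-diagonal
matrix with Jordan blocks (with eigenvalue `0`) of sizes 5,3. -/
def B0 : Matrix (Fin 8) (Fin 8) ℚ :=
  Matrix.of fun i j => if (j : ℕ) = (i : ℕ) + 1 ∧ (i : ℕ) ≠ 4 then 1 else 0

/-- Integer version of our commuting matrix. -/
def AZ : Matrix (Fin 8) (Fin 8) ℤ :=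
  !![0,-1,0,0,0,1,0,0;
     0,0,-1,0,0,0,1,0;
     0,0,0,-1,0,0,0,1;
     0,0,0,0,-1,0,0,0;
     0,0,0,0,0,0,0,0;
     0,0,-1,-1,0,0,1,1;
     0,0,0,-1,-1,0,0,1;
     0,0,0,0,-1,0,0,0]

/-- Integer version of `B0`. -/
def BZ : Matrix (Fin 8) (Fin 8) ℤ :=
  Matrix.of fun i j => if (j : ℕ) = (i : ℕ) + 1 ∧ (i : ℕ) ≠ 4 then 1 else 0

/-- The rational matrix obtained from `AZ`. -/
noncomputable def Amat : Matrix (Fin 8) (Fin 8) ℚ := (Int.castRingHom ℚ).mapMatrix AZ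

lemma B0_eq : B0 = (Int.castRingHom ℚ).mapMatrix BZ := by
  ext i j
  simp [B0, BZ, RingHom.mapMatrix_apply, Matrix.map_apply, apply_ite]

lemma matZ_eq {MZ NZ : Matrix (Fin 8) (Fin 8) ℤ} (h : ∀ i j, MZ i j = NZ i j) : MZ = NZ :=
  Matrix.ext h

lemma Amat_cube : Amat ^ 3 = 0 := by
  have hZ : AZ ^ 3 = 0 := matZ_eq (@of_decide_eq_true _ (@Fintype.decidableForallFintype _ _ (fun i => @Fintype.decidableForallFintype _ _ (fun j => Int.decEq ((AZ ^ 3) i j) 0) _) _) rfl)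
  rw [Amat, ← map_pow, hZ, map_zero]

/-- A family whose composition with a coordinate projection is the standard basis family
is linearly independent. -/
lemma li_of_proj {c n : ℕ} (v : Fin c → Fin n → ℚ) (p : Fin c → Fin n)
    (h : ∀ i j, v i (p j) = if i = j then 1 else 0) : LinearIndependent ℚ v := by
  apply LinearIndependent.of_comp (LinearMap.funLeft ℚ ℚ p)
  have hv : (⇑(LinearMap.funLeft ℚ ℚ p) ∘ v) = fun i => Pi.single i (1 : ℚ) := by
    funext i j
    simp [LinearMap.funLeft_apply, h i j, Pi.single_apply, eq_comm]
  rw [hv, show (fun i => Pi.single i (1 : ℚ)) = ⇑(Pi.basisFun ℚ (Fin c)) from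
    funext fun i => (Pi.basisFun_apply ℚ (Fin c) i).symm]
  exact (Pi.basisFun ℚ (Fin c)).linearIndependent

/-- Compute the kernel dimension of an explicit matrix from explicit integer kernel vectors
and explicit integer range vectors. -/
lemma finrank_ker_eq {c r : ℕ} (MZ : Matrix (Fin 8) (Fin 8) ℤ) (hcr : c + r = 8)
    (v : Fin c → Fin 8 → ℤ) (pv : Fin c → Fin 8)
    (hv0 : ∀ i, MZ.mulVec (v i) = 0)
    (hvp : ∀ i j, v i (pv j) = if i = j then 1 else 0)
    (w x : Fin r → Fin 8 → ℤ) (pw : Fin r → Fin 8)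
    (hw : ∀ i, MZ.mulVec (x i) = w i)
    (hwp : ∀ i j, w i (pw j) = if i = j then 1 else 0) :
    Module.finrank ℚ (LinearMap.ker ((Int.castRingHom ℚ).mapMatrix MZ).mulVecLin) = c := by
  set M : Matrix (Fin 8) (Fin 8) ℚ := (Int.castRingHom ℚ).mapMatrix MZ with hM
  set vq : Fin c → Fin 8 → ℚ := fun i j => ((v i j : ℤ) : ℚ) with hvq
  set wq : Fin r → Fin 8 → ℚ := fun i j => ((w i j : ℤ) : ℚ) with hwq
  have hMv : ∀ (u : Fin 8 → ℤ), M.mulVec (fun j => ((u j : ℤ) : ℚ)) =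
      fun i => ((MZ.mulVec u i : ℤ) : ℚ) := by
    intro u
    funext i
    rw [show (fun j => ((u j : ℤ) : ℚ)) = (Int.castRingHom ℚ) ∘ u from rfl, hM,
      RingHom.mapMatrix_apply, ← RingHom.map_mulVec]
    rfl
  have hvind : LinearIndependent ℚ vq := li_of_proj vq pv (fun i j => by
    rw [hvq]; simp only []; rw [hvp i j]; split <;> simp)
  have hwind : LinearIndependent ℚ wq := li_of_proj wq pw (fun i j => by
    rw [hwq]; simp only []; rw [hwp i j]; split <;> simp)
  have hker : Submodule.span ℚ (Set.range vq) ≤ LinearMap.ker M.mulVecLin := by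
    rw [Submodule.span_le]
    rintro _ ⟨i, rfl⟩
    have : M.mulVec (vq i) = 0 := by
      rw [hvq]; simp only []; rw [hMv (v i), hv0 i]
      funext j; simp
    simpa [LinearMap.mem_ker] using this
  have hrange : Submodule.span ℚ (Set.range wq) ≤ LinearMap.range M.mulVecLin := by
    rw [Submodule.span_le]
    rintro _ ⟨i, rfl⟩
    refine ⟨fun j => ((x i j : ℤ) : ℚ), ?_⟩
    rw [Matrix.mulVecLin_apply, hMv (x i), hw i]
  have h1 : c ≤ Module.finrank ℚ (LinearMap.ker M.mulVecLin) := by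
    have := Submodule.finrank_mono hker
    rwa [finrank_span_eq_card hvind, Fintype.card_fin] at this
  have h2 : r ≤ Module.finrank ℚ (LinearMap.range M.mulVecLin) := by
    have := Submodule.finrank_mono hrange
    rwa [finrank_span_eq_card hwind, Fintype.card_fin] at this
  have h3 := LinearMap.finrank_range_add_finrank_ker M.mulVecLin
  rw [Module.finrank_pi, Fintype.card_fin] at h3
  omega

/-- There is a nilpotent matrix `A` over `ℚ` commuting with `B0 = J(5,3)` whose
shape is `(3,3,1,1)`. -/
theorem stmt_15 :
    ∃ A : Matrix (Fin 8) (Fin 8) ℚ, IsNilpotent A ∧ A * B0 = B0 * A ∧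
      hasShape A ({3, 3, 1, 1} : Multiset ℕ) := by
  have hcomm : Amat * B0 = B0 * Amat := by
    have hZ : AZ * BZ = BZ * AZ := matZ_eq (by decide)
    rw [Amat, B0_eq, ← map_mul, ← map_mul, hZ]
  refine ⟨Amat, ⟨3, Amat_cube⟩, hcomm, ?_, by decide, ?_⟩
  · decide
  intro k
  match k with
  | 0 =>
    rw [pow_zero, Matrix.mulVecLin_one]
    simp
    exact finrank_bot (R := ℚ) (M := Fin 8 → ℚ)
  | 1 =>
    rw [pow_one, Amat]
    rw [finrank_ker_eq AZ (c := 4) (r := 4) rfl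
      ![![1,0,0,0,0,0,0,0], ![0,1,0,0,0,1,0,0], ![0,0,1,0,0,0,1,0], ![0,0,0,1,0,0,0,1]]
      ![0,1,2,3]
      (fun i => funext fun j => by revert i j; decide) (by decide)
      ![![1,0,0,0,0,0,0,0], ![0,1,0,0,0,1,0,0], ![0,0,1,0,0,1,1,0], ![0,0,0,1,0,0,1,1]]
      ![![0,0,0,0,0,1,0,0], ![0,0,0,0,0,0,1,0], ![0,0,0,0,0,0,0,1], ![0,0,0,0,-1,0,0,0]]
      ![0,1,2,3]
      (fun i => funext fun j => by revert i j; decide) (by decide)]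
    decide
  | 2 =>
    rw [show Amat ^ 2 = (Int.castRingHom ℚ).mapMatrix (AZ ^ 2) by rw [Amat, map_pow]]
    rw [finrank_ker_eq (AZ ^ 2) (c := 6) (r := 2) rfl
      ![![1,0,0,0,0,0,0,0], ![0,1,0,0,0,0,0,0], ![0,0,1,0,0,0,0,0],
        ![0,0,0,1,0,0,0,1], ![0,0,0,0,0,1,0,0], ![0,0,0,0,0,0,1,0]]
      ![0,1,2,3,5,6]
      (fun i => funext fun j => by revert i j; decide) (by decide)
      ![![1,0,0,0,0,0,0,0], ![0,1,0,0,0,1,0,0]]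
      ![![0,0,0,0,0,0,0,1], ![0,0,0,0,-1,0,0,0]]
      ![0,1]
      (fun i => funext fun j => by revert i j; decide) (by decide)]
    decide
  | (k + 3) =>
    have h0 : Amat ^ (k + 3) = 0 := by
      rw [pow_add, Amat_cube, mul_zero]
    rw [h0, Matrix.mulVecLin_zero, LinearMap.ker_zero, finrank_top, Module.finrank_pi,
      Fintype.card_fin]
    simp only [Multiset.insert_eq_cons, Multiset.map_cons, Multiset.map_singleton,
      Multiset.sum_cons, Multiset.sum_singleton]
    omega
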